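/- Let λ_e > 0, λ_u > 0, H > 0, K ≥ 0, η_L > 0, η_N > 0. Define, for Q > 0, T(Q) = ((η_L/η_N)^{1/2}/(2Q))·exp(−(η_N/η_L)^{1/2}·Q·(H² + K²)) + (1 + H·Q)·exp(−H·Q)/Q² − (1 + Q·√(H² + K²))·exp(−Q·√(H² + K²))/Q², and F(Q) = 1 − exp(−2π·λ_e·exp(π·λ_u·H²)·T(Q)). Then T(Q) > 0 for all Q > 0, F is strictly decreasing on (0, ∞), F(Q) → 1 as Q → 0⁺, F(Q) → 0 as Q → ∞, and for every ε ∈ (0, 1) there exists a unique Q > 0 with F(Q) = ε. -/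

import Mathlib

open Real Set Filter

private lemma aux_hasDeriv (Q : ℝ) (hQ : Q ≠ 0) (x : ℝ) :
    HasDerivAt (fun y : ℝ => -((1 + Q * y) * Real.exp (-(Q * y))) / Q ^ 2)
      (x * Real.exp (-(Q * x))) x := by
  have h1 : HasDerivAt (fun y : ℝ => 1 + Q * y) Q x := by
    simpa using ((hasDerivAt_id x).const_mul Q).const_add 1
  have h2 : HasDerivAt (fun y : ℝ => Real.exp (-(Q * y))) (-Q * Real.exp (-(Q * x))) x := by
    have h3 : HasDerivAt (fun y : ℝ => -(Q * y)) (-Q) x := by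
      simpa using ((hasDerivAt_id x).const_mul Q).fun_neg
    simpa [mul_comm] using h3.exp
  have h4 := ((h1.fun_mul h2).fun_neg).div_const (Q ^ 2)
  refine h4.congr_deriv ?_
  field_simp
  ring

private lemma aux_A_eq (Q H S : ℝ) (hQ : Q ≠ 0) (hHS : H ≤ S) :
    (1 + H * Q) * Real.exp (-(H * Q)) / Q ^ 2 - (1 + Q * S) * Real.exp (-(Q * S)) / Q ^ 2
      = ∫ x in H..S, x * Real.exp (-(Q * x)) := by
  have h := intervalIntegral.integral_eq_sub_of_hasDerivAt
    (f := fun y : ℝ => -((1 + Q * y) * Real.exp (-(Q * y))) / Q ^ 2)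
    (f' := fun x : ℝ => x * Real.exp (-(Q * x)))
    (fun x _ => aux_hasDeriv Q hQ x)
    ((Continuous.intervalIntegrable (by fun_prop) H S))
  rw [h]
  ring_nf

private lemma aux_tail (c : ℝ) (hc : 0 < c) :
    Tendsto (fun Q : ℝ => (1 + c * Q) * Real.exp (-(c * Q)) / Q ^ 2) atTop (nhds 0) := by
  have hexp : Tendsto (fun Q : ℝ => Real.exp (-(c * Q))) atTop (nhds 0) := by
    apply Real.tendsto_exp_atBot.comp
    exact tendsto_neg_atTop_atBot.comp (tendsto_id.const_mul_atTop hc)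
  have h1 : Tendsto (fun Q : ℝ => (Q⁻¹ * Q⁻¹ + c * Q⁻¹) * Real.exp (-(c * Q))) atTop
      (nhds ((0 * 0 + c * 0) * 0)) :=
    ((tendsto_inv_atTop_zero.mul tendsto_inv_atTop_zero).add
      (tendsto_inv_atTop_zero.const_mul c)).mul hexp
  have h1' : Tendsto (fun Q : ℝ => (Q⁻¹ * Q⁻¹ + c * Q⁻¹) * Real.exp (-(c * Q))) atTop
      (nhds 0) := by simpa using h1
  apply h1'.congr'
  filter_upwards [eventually_gt_atTop 0] with Q hQ
  have hQ' : Q ≠ 0 := ne_of_gt hQ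
  field_simp

/-- Properties of the closed-form approximate secrecy outage probability of Corollary 2
(equation (17)) of the paper, as a function of `Q = Q₁ = π² λ_u √β_e / 2`: it is strictly
decreasing, tends to 1 at 0⁺ and to 0 at ∞, so the outage constraint `F(Q) = ε` has a
unique positive solution. -/
theorem secrecy_outage_strictAnti_unique_solution
    (le lu H K eL eN : ℝ) (hle : 0 < le) (hlu : 0 < lu) (hH : 0 < H) (hK : 0 ≤ K)
    (heL : 0 < eL) (heN : 0 < eN)
    (T F : ℝ → ℝ)
    (hT : ∀ Q : ℝ, T Q
      = Real.sqrt (eL / eN) / (2 * Q)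
          * Real.exp (-(Real.sqrt (eN / eL) * Q * (H ^ 2 + K ^ 2)))
        + (1 + H * Q) * Real.exp (-(H * Q)) / Q ^ 2
        - (1 + Q * Real.sqrt (H ^ 2 + K ^ 2))
            * Real.exp (-(Q * Real.sqrt (H ^ 2 + K ^ 2))) / Q ^ 2)
    (hF : ∀ Q : ℝ, F Q = 1 - Real.exp (-(2 * π * le * Real.exp (π * lu * H ^ 2) * T Q))) :
    (∀ Q : ℝ, 0 < Q → 0 < T Q) ∧
    StrictAntiOn F (Ioi 0) ∧
    Tendsto F (nhdsWithin 0 (Ioi 0)) (nhds 1) ∧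
    Tendsto F atTop (nhds 0) ∧
    (∀ ε : ℝ, ε ∈ Ioo (0 : ℝ) 1 → ∃! Q : ℝ, 0 < Q ∧ F Q = ε) := by
  set s : ℝ := Real.sqrt (eL / eN) with hs_def
  set a : ℝ := Real.sqrt (eN / eL) with ha_def
  set S : ℝ := Real.sqrt (H ^ 2 + K ^ 2) with hS_def
  set M : ℝ := H ^ 2 + K ^ 2 with hM_def
  have hM : 0 < M := by positivity
  have hs : 0 < s := Real.sqrt_pos.2 (div_pos heL heN)
  have ha : 0 < a := Real.sqrt_pos.2 (div_pos heN heL)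
  have hS0 : 0 < S := Real.sqrt_pos.2 hM
  have hHS : H ≤ S := by
    rw [hS_def, show H = Real.sqrt (H ^ 2) from (Real.sqrt_sq hH.le).symm]
    exact Real.sqrt_le_sqrt (by nlinarith)
  set B : ℝ → ℝ := fun Q => s / (2 * Q) * Real.exp (-(a * Q * M)) with hB_def
  set A : ℝ → ℝ := fun Q => ∫ x in H..S, x * Real.exp (-(Q * x)) with hA_def
  -- T = B + A on positive reals
  have hsplit : ∀ Q : ℝ, Q ≠ 0 → T Q = B Q + A Q := by
    intro Q hQ
    rw [hT Q, hB_def, hA_def]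
    simp only
    rw [← aux_A_eq Q H S hQ hHS]
    ring
  have hApos : ∀ Q : ℝ, 0 ≤ A Q := by
    intro Q
    exact intervalIntegral.integral_nonneg hHS (fun u hu => by
      have : 0 ≤ u := le_trans hH.le hu.1
      positivity)
  have hBpos : ∀ Q : ℝ, 0 < Q → 0 < B Q := by
    intro Q hQ
    have : 0 < s / (2 * Q) := by positivity
    positivity
  have hTpos : ∀ Q : ℝ, 0 < Q → 0 < T Q := by
    intro Q hQ
    rw [hsplit Q (ne_of_gt hQ)]
    have := hApos Q
    have := hBpos Q hQ
    linarith
  -- B is strictly decreasing on (0, ∞)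
  have hBanti : StrictAntiOn B (Ioi 0) := by
    intro Q1 h1 Q2 h2 h12
    simp only [mem_Ioi] at h1 h2
    have e1 : s / (2 * Q2) < s / (2 * Q1) := by
      apply div_lt_div_of_pos_left hs (by positivity) (by linarith)
    have e2 : Real.exp (-(a * Q2 * M)) < Real.exp (-(a * Q1 * M)) := by
      apply Real.exp_lt_exp.2
      have : a * Q1 * M < a * Q2 * M := by
        nlinarith [mul_pos (mul_pos ha hM) (sub_pos.2 h12)]
      linarith
    have hp1 : 0 < s / (2 * Q2) := by positivity
    have hp2 : 0 < Real.exp (-(a * Q2 * M)) := Real.exp_pos _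
    calc B Q2 = s / (2 * Q2) * Real.exp (-(a * Q2 * M)) := rfl
      _ < s / (2 * Q1) * Real.exp (-(a * Q1 * M)) :=
        mul_lt_mul'' e1 e2 hp1.le hp2.le
      _ = B Q1 := rfl
  -- A is antitone on (0, ∞)
  have hAanti : ∀ Q1 Q2 : ℝ, 0 < Q1 → Q1 ≤ Q2 → A Q2 ≤ A Q1 := by
    intro Q1 Q2 hQ1 h12
    apply intervalIntegral.integral_mono_on hHS
      (Continuous.intervalIntegrable (by fun_prop) H S)
      (Continuous.intervalIntegrable (by fun_prop) H S)
    intro x hx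
    have hx0 : 0 ≤ x := le_trans hH.le hx.1
    have : Q1 * x ≤ Q2 * x := mul_le_mul_of_nonneg_right h12 hx0
    exact mul_le_mul_of_nonneg_left (Real.exp_le_exp.2 (by linarith)) hx0
  have hTanti : StrictAntiOn T (Ioi 0) := by
    intro Q1 h1 Q2 h2 h12
    simp only [mem_Ioi] at h1 h2
    rw [hsplit Q1 (ne_of_gt h1), hsplit Q2 (ne_of_gt h2)]
    have := hBanti h1 h2 h12
    have := hAanti Q1 Q2 h1 h12.le
    linarith [hBanti (mem_Ioi.2 h1) (mem_Ioi.2 h2) h12]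
  set c : ℝ := 2 * π * le * Real.exp (π * lu * H ^ 2) with hc_def
  have hc : 0 < c := by
    have := Real.pi_pos
    positivity
  have hFanti : StrictAntiOn F (Ioi 0) := by
    intro Q1 h1 Q2 h2 h12
    rw [hF Q1, hF Q2]
    have hTlt : T Q2 < T Q1 := hTanti h1 h2 h12
    have : Real.exp (-(c * T Q1)) < Real.exp (-(c * T Q2)) := by
      apply Real.exp_lt_exp.2
      nlinarith
    linarith
  -- limit as Q → 0⁺
  have hTtop : Tendsto T (nhdsWithin 0 (Ioi 0)) atTop := by
    have h1 : Tendsto (fun Q : ℝ => s / (2 * Q)) (nhdsWithin 0 (Ioi 0)) atTop := by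
      have : Tendsto (fun Q : ℝ => s / 2 * Q⁻¹) (nhdsWithin 0 (Ioi 0)) atTop :=
        tendsto_inv_nhdsGT_zero.const_mul_atTop (by positivity)
      apply this.congr
      intro Q
      field_simp
    have h2 : Tendsto (fun Q : ℝ => Real.exp (-(a * Q * M))) (nhdsWithin 0 (Ioi 0)) (nhds 1) := by
      have hcont : Continuous (fun Q : ℝ => Real.exp (-(a * Q * M))) := by fun_prop
      exact (hcont.tendsto' 0 1 (by simp)).mono_left nhdsWithin_le_nhds
    have hBt : Tendsto B (nhdsWithin 0 (Ioi 0)) atTop := h1.atTop_mul_pos one_pos h2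
    apply tendsto_atTop_mono' _ _ hBt
    filter_upwards [self_mem_nhdsWithin] with Q hQ
    rw [hsplit Q (ne_of_gt (mem_Ioi.1 hQ))]
    linarith [hApos Q]
  have hF0 : Tendsto F (nhdsWithin 0 (Ioi 0)) (nhds 1) := by
    have h1 : Tendsto (fun Q : ℝ => -(c * T Q)) (nhdsWithin 0 (Ioi 0)) atBot :=
      tendsto_neg_atTop_atBot.comp (hTtop.const_mul_atTop hc)
    have h2 : Tendsto (fun Q : ℝ => Real.exp (-(c * T Q))) (nhdsWithin 0 (Ioi 0)) (nhds 0) :=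
      Real.tendsto_exp_atBot.comp h1
    have h3 : Tendsto (fun Q : ℝ => 1 - Real.exp (-(c * T Q))) (nhdsWithin 0 (Ioi 0))
        (nhds (1 - 0)) := tendsto_const_nhds.sub h2
    simp only [sub_zero] at h3
    exact h3.congr (fun Q => (hF Q).symm)
  -- limit as Q → ∞
  have hT0 : Tendsto T atTop (nhds 0) := by
    have hexp : Tendsto (fun Q : ℝ => Real.exp (-(a * Q * M))) atTop (nhds 0) := by
      apply Real.tendsto_exp_atBot.comp
      apply tendsto_neg_atTop_atBot.comp
      have : Tendsto (fun Q : ℝ => (a * M) * Q) atTop atTop :=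
        tendsto_id.const_mul_atTop (by positivity)
      apply this.congr
      intro Q; ring
    have L1 : Tendsto B atTop (nhds 0) := by
      have h1 : Tendsto (fun Q : ℝ => s / (2 * Q)) atTop (nhds 0) := by
        have : Tendsto (fun Q : ℝ => s / 2 * Q⁻¹) atTop (nhds (s / 2 * 0)) :=
          tendsto_inv_atTop_zero.const_mul (s / 2)
        simp only [mul_zero] at this
        apply this.congr
        intro Q
        field_simp
      have := h1.mul hexp
      simpa using this
    have L2 : Tendsto (fun Q : ℝ => (1 + H * Q) * Real.exp (-(H * Q)) / Q ^ 2) atTop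
        (nhds 0) := aux_tail H hH
    have L3 : Tendsto (fun Q : ℝ => (1 + Q * S) * Real.exp (-(Q * S)) / Q ^ 2) atTop
        (nhds 0) := by
      have := aux_tail S hS0
      apply this.congr
      intro Q
      rw [mul_comm S Q]
    have := (L1.add L2).sub L3
    simp only [add_zero, sub_zero] at this
    exact this.congr (fun Q => (hT Q).symm)
  have hFinf : Tendsto F atTop (nhds 0) := by
    have h1 : Tendsto (fun Q : ℝ => Real.exp (-(c * T Q))) atTop (nhds (Real.exp (-(c * 0)))) :=
      (Real.continuous_exp.tendsto _).comp ((hT0.const_mul c).neg)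
    have h2 : Tendsto (fun Q : ℝ => 1 - Real.exp (-(c * T Q))) atTop
        (nhds (1 - Real.exp (-(c * 0)))) := tendsto_const_nhds.sub h1
    have : (1 : ℝ) - Real.exp (-(c * 0)) = 0 := by simp
    rw [this] at h2
    exact h2.congr (fun Q => (hF Q).symm)
  -- continuity of F on (0, ∞)
  have hTcont : ContinuousOn T (Ioi 0) := by
    have : ContinuousOn (fun Q : ℝ =>
        s / (2 * Q) * Real.exp (-(a * Q * M))
        + (1 + H * Q) * Real.exp (-(H * Q)) / Q ^ 2
        - (1 + Q * S) * Real.exp (-(Q * S)) / Q ^ 2) (Ioi 0) := by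
      apply ContinuousOn.sub
      apply ContinuousOn.add
      · exact (continuousOn_const.div (by fun_prop)
          (fun Q hQ => by have := mem_Ioi.1 hQ; positivity)).mul (by fun_prop)
      · exact ContinuousOn.div (by fun_prop) (by fun_prop)
          (fun Q hQ => by have := mem_Ioi.1 hQ; positivity)
      · exact ContinuousOn.div (by fun_prop) (by fun_prop)
          (fun Q hQ => by have := mem_Ioi.1 hQ; positivity)
    exact this.congr (fun Q _ => hT Q)
  have hFcont : ContinuousOn F (Ioi 0) := by
    have : ContinuousOn (fun Q : ℝ => 1 - Real.exp (-(c * T Q))) (Ioi 0) :=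
      continuousOn_const.sub (Real.continuous_exp.comp_continuousOn
        ((hTcont.const_smul c).neg))
    exact this.congr (fun Q _ => hF Q)
  refine ⟨hTpos, hFanti, hF0, hFinf, ?_⟩
  intro ε hε
  obtain ⟨hε0, hε1⟩ := hε
  -- find a with F a > ε
  have hev1 : ∀ᶠ Q in nhdsWithin 0 (Ioi 0), ε < F Q :=
    hF0.eventually (eventually_gt_nhds hε1)
  obtain ⟨x, hx1, hx2⟩ := (hev1.and self_mem_nhdsWithin).exists
  have hxpos : 0 < x := mem_Ioi.1 hx2
  -- find b with F b < ε
  have hev2 : ∀ᶠ Q in atTop, F Q < ε := hFinf.eventually (eventually_lt_nhds hε0)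
  obtain ⟨y, hy1, hy2⟩ := (hev2.and (eventually_gt_atTop 0)).exists
  have hxy : x < y := by
    by_contra hcon
    push_neg at hcon
    rcases eq_or_lt_of_le hcon with h | h
    · rw [h] at hy1; linarith
    · have := hFanti (mem_Ioi.2 hy2) (mem_Ioi.2 hxpos) h
      linarith
  have hIcc : Icc x y ⊆ Ioi 0 := fun z hz => lt_of_lt_of_le hxpos hz.1
  have hmem : ε ∈ Icc (F y) (F x) := ⟨hy1.le, hx1.le⟩
  obtain ⟨Q, hQmem, hQeq⟩ := intermediate_value_Icc' hxy.le (hFcont.mono hIcc) hmem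
  have hQpos : 0 < Q := lt_of_lt_of_le hxpos hQmem.1
  refine ⟨Q, ⟨hQpos, hQeq⟩, ?_⟩
  intro y' hy'
  exact hFanti.injOn (mem_Ioi.2 hy'.1) (mem_Ioi.2 hQpos) (hy'.2.trans hQeq.symm)
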